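/- arXiv:1306.2690 — 6 statements merged into one kernel-verified Lean document; each statement's English description precedes it below -/
import Mathlib

section
/- Let X = (V,E) be a finite k-regular simple graph on n vertices with adjacency-matrix eigenvalues λ1 ≥ λ2 ≥ … ≥ λn, and let V = Ω1 ∪ Ω2 be a partition of the vertex set into two disjoint parts. Then the number e(Ω1,Ω2) of edges with one endpoint in Ω1 and the other in Ω2 satisfies e(Ω1,Ω2) ≥ (k − λ2)·|Ω1|·|Ω2| / |V|. -/
open Matrix RealInnerProductSpace in
lemma spectral_bound {V : Type*} [Fintype V] [DecidableEq V] [Nonempty V]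
    {A : Matrix V V ℝ} (hA : A.IsHermitian) {k μ : ℝ} {i₀ : V}
    (hle : ∀ i, i ≠ i₀ → hA.eigenvalues i ≤ μ) (hμk : μ < k)
    (hone : A *ᵥ (fun _ => (1:ℝ)) = fun _ => k)
    (f : EuclideanSpace ℝ V) (hf : ∑ x, f x = 0) :
    ∑ x, f x * (A *ᵥ (f : V → ℝ)) x ≤ μ * ∑ x, f x ^ 2 := by
  classical
  set b := hA.eigenvectorBasis with hb
  set T : EuclideanSpace ℝ V →ₗ[ℝ] EuclideanSpace ℝ V := Matrix.toEuclideanLin A with hT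
  have hsym : (Matrix.toEuclideanLin A).IsSymmetric :=
    Matrix.isHermitian_iff_isSymmetric.1 hA
  have hTb : ∀ i, T (b i) = hA.eigenvalues i • b i := by
    intro i
    rw [hT, Matrix.toEuclideanLin_apply, hb, hA.mulVec_eigenvectorBasis]
    rfl
  have hrep : ∀ (x : EuclideanSpace ℝ V) i,
      b.repr (T x) i = hA.eigenvalues i * b.repr x i := by
    intro x i
    rw [b.repr_apply_apply, b.repr_apply_apply]
    have h1 : ⟪T (b i), x⟫ = ⟪b i, T x⟫ := hsym (b i) x
    rw [← h1, hTb i, real_inner_smul_left]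
  set u : EuclideanSpace ℝ V := WithLp.toLp 2 (fun _ => (1:ℝ)) with hu
  set c : V → ℝ := fun i => b.repr f i with hc
  set d : V → ℝ := fun i => b.repr u i with hd
  have hTu : T u = k • u := by
    rw [hT, Matrix.toEuclideanLin_apply]
    have h2 : u.ofLp = fun _ => (1:ℝ) := rfl
    rw [h2, hone]
    ext x
    simp [hu]
  have heig : ∀ i, hA.eigenvalues i * d i = k * d i := by
    intro i
    have h1 := hrep u i
    rw [hTu, _root_.map_smul] at h1
    simpa [hd] using h1.symm
  have hd0 : ∀ i, i ≠ i₀ → d i = 0 := by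
    intro i hi
    have h1 := heig i
    have h2 : hA.eigenvalues i ≠ k := ((hle i hi).trans_lt hμk).ne
    by_contra h3
    exact h2 (mul_right_cancel₀ h3 h1)
  have hdi₀ : d i₀ ≠ 0 := by
    intro h0
    have hz : b.repr u = 0 := by
      ext i
      by_cases hi : i = i₀
      · subst hi; simpa using h0
      · simpa using hd0 i hi
    have hu0 : u = 0 := by
      rw [← b.repr.map_eq_zero_iff]; exact hz
    have := congrFun (congrArg (WithLp.equiv 2 (V → ℝ)) hu0) (Classical.arbitrary V)
    simpa [hu] using this
  have hinner : (∑ i, d i * c i) = 0 := by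
    have h1 : ⟪u, f⟫ = ∑ x, f x := by
      simp [PiLp.inner_apply, RCLike.inner_apply, hu]
    have h2 : ⟪b.repr u, b.repr f⟫ = ⟪u, f⟫ := b.repr.inner_map_map u f
    rw [h1, hf] at h2
    rw [← h2]
    simp only [PiLp.inner_apply, RCLike.inner_apply, conj_trivial, hc, hd]
    exact Finset.sum_congr rfl fun _ _ => mul_comm _ _
  have hc0 : c i₀ = 0 := by
    have h4 : (∑ i, d i * c i) = d i₀ * c i₀ := by
      rw [Finset.sum_eq_single i₀]
      · intro i _ hi; rw [hd0 i hi, zero_mul]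
      · intro h; exact absurd (Finset.mem_univ i₀) h
    rw [h4] at hinner
    exact (mul_eq_zero.mp hinner).resolve_left hdi₀
  have hlhs : ∑ x, f x * (A *ᵥ (f : V → ℝ)) x = ∑ i, hA.eigenvalues i * c i ^ 2 := by
    have h1 : ⟪f, T f⟫ = ∑ x, f x * (A *ᵥ (f : V → ℝ)) x := by
      simp only [PiLp.inner_apply, RCLike.inner_apply, conj_trivial]
      exact Finset.sum_congr rfl fun _ _ => mul_comm _ _
    have h2 : ⟪b.repr f, b.repr (T f)⟫ = ⟪f, T f⟫ := b.repr.inner_map_map f (T f)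
    rw [← h1, ← h2]
    simp only [PiLp.inner_apply, RCLike.inner_apply, conj_trivial]
    refine Finset.sum_congr rfl fun i _ => ?_
    rw [hrep f i]
    simp only [hc]
    ring
  have hrhs : ∑ x, f x ^ 2 = ∑ i, c i ^ 2 := by
    have h1 : ⟪f, f⟫ = ∑ x, f x ^ 2 := by
      simp only [PiLp.inner_apply, RCLike.inner_apply, conj_trivial, sq]
    have h2 : ⟪b.repr f, b.repr f⟫ = ⟪f, f⟫ := b.repr.inner_map_map f f
    rw [← h1, ← h2]
    simp only [PiLp.inner_apply, RCLike.inner_apply, conj_trivial, hc, sq]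
  rw [hlhs, hrhs, Finset.mul_sum]
  refine Finset.sum_le_sum fun i _ => ?_
  by_cases hi : i = i₀
  · subst hi; rw [hc0]; ring_nf; exact le_refl _
  · exact mul_le_mul_of_nonneg_right (hle i hi) (sq_nonneg _)

section Comb
variable {V : Type*} [Fintype V] (X : SimpleGraph V) [DecidableRel X.Adj]

lemma row_sum {k : ℕ} (hreg : X.IsRegularOfDegree k) (x : V) :
    ∑ y, (if X.Adj x y then (1:ℝ) else 0) = k := by
  rw [Finset.sum_boole]
  rw [← SimpleGraph.neighborFinset_eq_filter]
  have h2 := hreg x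
  rw [SimpleGraph.degree] at h2
  rw [h2]

lemma const_double (s t : Finset V) (r : ℝ) :
    ∑ x ∈ s, ∑ y ∈ t, (if X.Adj x y then r else 0)
      = r * ∑ x ∈ s, ∑ y ∈ t, (if X.Adj x y then (1:ℝ) else 0) := by
  simp only [Finset.mul_sum, mul_ite, mul_one, mul_zero]

lemma cross_eq (s t : Finset V) :
    ∑ x ∈ s, ∑ y ∈ t, (if X.Adj x y then (1:ℝ) else 0)
      = (((s ×ˢ t).filter fun p => X.Adj p.1 p.2).card : ℝ) := by
  rw [← Finset.sum_product']
  rw [Finset.sum_boole]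

lemma swap_eq (s t : Finset V) :
    ∑ x ∈ s, ∑ y ∈ t, (if X.Adj x y then (1:ℝ) else 0)
      = ∑ x ∈ t, ∑ y ∈ s, (if X.Adj x y then (1:ℝ) else 0) := by
  rw [Finset.sum_comm]
  refine Finset.sum_congr rfl fun x _ => Finset.sum_congr rfl fun y _ => ?_
  exact if_congr (X.adj_comm y x) rfl rfl

end Comb

/-- The number of edges of the graph `X` with one endpoint in `Ω₁` and the
other endpoint in `Ω₂` (for disjoint `Ω₁`, `Ω₂` each crossing edge is counted
exactly once as an ordered pair). -/
def crossingEdges {V : Type*} [Fintype V] [DecidableEq V] (X : SimpleGraph V)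
    [DecidableRel X.Adj] (Ω₁ Ω₂ : Finset V) : ℕ :=
  ((Ω₁ ×ˢ Ω₂).filter (fun p => X.Adj p.1 p.2)).card

/-- **Expander Crossing Lemma.**  Let `X` be a finite `k`-regular simple graph
whose adjacency-matrix eigenvalues, listed with multiplicity in decreasing order
via the enumeration `e`, are `λ₁ ≥ λ₂ ≥ …`.  For every partition
`V = Ω₁ ∪ Ω₂` into disjoint parts, the number of crossing edges satisfies
`e(Ω₁,Ω₂) ≥ (k − λ₂)·|Ω₁|·|Ω₂|/|V|`. -/
theorem expander_crossing_lemma {V : Type*} [Fintype V] [DecidableEq V]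
    (X : SimpleGraph V) [DecidableRel X.Adj] (k : ℕ)
    (hreg : X.IsRegularOfDegree k)
    (hA : (X.adjMatrix ℝ).IsHermitian)
    (e : V ≃ Fin (Fintype.card V)) (hn : 1 < Fintype.card V)
    (hdecr : ∀ i j : Fin (Fintype.card V), i ≤ j →
      hA.eigenvalues (e.symm j) ≤ hA.eigenvalues (e.symm i))
    (Ω₁ Ω₂ : Finset V) (hdisj : Disjoint Ω₁ Ω₂) (hcover : Ω₁ ∪ Ω₂ = Finset.univ) :
    ((k : ℝ) - hA.eigenvalues (e.symm ⟨1, hn⟩)) * Ω₁.card * Ω₂.card / (Fintype.card V) ≤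
      crossingEdges X Ω₁ Ω₂ := by
  classical
  have hV : Nonempty V := Fintype.card_pos_iff.mp (by omega)
  have hnpos : (0:ℝ) < (Fintype.card V : ℝ) := by
    have : 0 < Fintype.card V := by omega
    exact_mod_cast this
  set μ := hA.eigenvalues (e.symm ⟨1, hn⟩) with hμ
  rw [div_le_iff₀ hnpos]
  set a := (Ω₁.card : ℝ) with ha
  set bb := (Ω₂.card : ℝ) with hbb
  set E := (crossingEdges X Ω₁ Ω₂ : ℝ) with hE
  have ha0 : (0:ℝ) ≤ a := Nat.cast_nonneg _
  have hb0 : (0:ℝ) ≤ bb := Nat.cast_nonneg _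
  have hE0 : (0:ℝ) ≤ E := Nat.cast_nonneg _
  by_cases hμk : μ < (k:ℝ)
  · -- main case
    set f : EuclideanSpace ℝ V := WithLp.toLp 2 (fun x => if x ∈ Ω₁ then bb else -a) with hfdef
    have hmem1 : ∀ x ∈ Ω₂, x ∉ Ω₁ := fun x hx => Finset.disjoint_right.mp hdisj hx
    have hsplit : ∀ g : V → ℝ, ∑ x, g x = ∑ x ∈ Ω₁, g x + ∑ x ∈ Ω₂, g x := by
      intro g
      rw [← Finset.sum_union hdisj, hcover]
    have hf1 : ∀ x ∈ Ω₁, f x = bb := fun x hx => if_pos hx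
    have hf2 : ∀ x ∈ Ω₂, f x = -a := fun x hx => if_neg (hmem1 x hx)
    have hfsum : ∑ x, f x = 0 := by
      rw [hsplit, Finset.sum_congr rfl hf1, Finset.sum_congr rfl hf2]
      simp only [Finset.sum_const, nsmul_eq_mul, ← ha, ← hbb]
      ring
    have hsum2 : ∑ x, f x ^ 2 = a * bb ^ 2 + bb * a ^ 2 := by
      have e1 : ∑ x ∈ Ω₁, f x ^ 2 = ∑ x ∈ Ω₁, bb ^ 2 :=
        Finset.sum_congr rfl fun x hx => by rw [hf1 x hx]
      have e2 : ∑ x ∈ Ω₂, f x ^ 2 = ∑ x ∈ Ω₂, a ^ 2 :=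
        Finset.sum_congr rfl fun x hx => by rw [hf2 x hx]; ring
      rw [hsplit (fun x => f x ^ 2), e1, e2]
      simp only [Finset.sum_const, nsmul_eq_mul, ← ha, ← hbb]
    have hone : Matrix.mulVec (X.adjMatrix ℝ) (fun _ => (1:ℝ)) = fun _ => (k:ℝ) := by
      funext v
      have h3 := SimpleGraph.adjMatrix_mulVec_const_apply_of_regular
        (α := ℝ) (a := (1:ℝ)) hreg (v := v)
      simpa using h3
    have hle : ∀ i, i ≠ e.symm ⟨0, by omega⟩ → hA.eigenvalues i ≤ μ := by
      intro i hi
      have h1 : (⟨1, hn⟩ : Fin (Fintype.card V)) ≤ e i := by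
        rw [Fin.le_def]
        show 1 ≤ (e i : ℕ)
        rcases Nat.eq_zero_or_pos ((e i : Fin _) : ℕ) with h | h
        · exfalso
          apply hi
          have h5 : e i = ⟨0, by omega⟩ := Fin.ext h
          rw [← Equiv.symm_apply_apply e i, h5]
        · exact h
      have h2 := hdecr ⟨1, hn⟩ (e i) h1
      simpa using h2
    have hmain := spectral_bound hA hle hμk hone f hfsum
    -- expand the quadratic form
    have hS0 : ∑ x, f x * (Matrix.mulVec (X.adjMatrix ℝ) (f : V → ℝ)) x
        = ∑ x, ∑ y, (if X.Adj x y then f x * f y else 0) := by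
      refine Finset.sum_congr rfl fun x _ => ?_
      rw [show (Matrix.mulVec (X.adjMatrix ℝ) (f : V → ℝ)) x = ∑ y, X.adjMatrix ℝ x y * f y from rfl]
      rw [Finset.mul_sum]
      refine Finset.sum_congr rfl fun y _ => ?_
      rw [SimpleGraph.adjMatrix_apply]
      by_cases h : X.Adj x y <;> simp [h]
    have hblock : ∀ (s t : Finset V) (r₁ r₂ : ℝ), (∀ x ∈ s, f x = r₁) → (∀ y ∈ t, f y = r₂) →
        ∑ x ∈ s, ∑ y ∈ t, (if X.Adj x y then f x * f y else 0)
          = r₁ * r₂ * (∑ x ∈ s, ∑ y ∈ t, (if X.Adj x y then (1:ℝ) else 0)) := by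
      intro s t r₁ r₂ h1 h2
      rw [show (∑ x ∈ s, ∑ y ∈ t, (if X.Adj x y then f x * f y else 0))
          = ∑ x ∈ s, ∑ y ∈ t, (if X.Adj x y then r₁ * r₂ else 0) from
        Finset.sum_congr rfl fun x hx => Finset.sum_congr rfl fun y hy => by
          rw [h1 x hx, h2 y hy]]
      exact const_double X s t (r₁ * r₂)
    set S11 := ∑ x ∈ Ω₁, ∑ y ∈ Ω₁, (if X.Adj x y then (1:ℝ) else 0) with hS11d
    set S12 := ∑ x ∈ Ω₁, ∑ y ∈ Ω₂, (if X.Adj x y then (1:ℝ) else 0) with hS12d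
    set S21 := ∑ x ∈ Ω₂, ∑ y ∈ Ω₁, (if X.Adj x y then (1:ℝ) else 0) with hS21d
    set S22 := ∑ x ∈ Ω₂, ∑ y ∈ Ω₂, (if X.Adj x y then (1:ℝ) else 0) with hS22d
    have hrow1 : S11 + S12 = (k:ℝ) * a := by
      rw [hS11d, hS12d, ← Finset.sum_add_distrib]
      rw [Finset.sum_congr rfl (fun x _ => (hsplit (fun y => if X.Adj x y then (1:ℝ) else 0)).symm)]
      rw [Finset.sum_congr rfl (fun x _ => row_sum X hreg x)]
      rw [Finset.sum_const, nsmul_eq_mul, ← ha, mul_comm]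
    have hrow2 : S21 + S22 = (k:ℝ) * bb := by
      rw [hS21d, hS22d, ← Finset.sum_add_distrib]
      rw [Finset.sum_congr rfl (fun x _ => (hsplit (fun y => if X.Adj x y then (1:ℝ) else 0)).symm)]
      rw [Finset.sum_congr rfl (fun x _ => row_sum X hreg x)]
      rw [Finset.sum_const, nsmul_eq_mul, ← hbb, mul_comm]
    have h21 : S21 = S12 := swap_eq X Ω₂ Ω₁
    have h12E : S12 = E := by
      rw [hS12d, cross_eq, hE]
      rfl
    have hSdecomp : ∑ x, f x * (Matrix.mulVec (X.adjMatrix ℝ) (f : V → ℝ)) x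
        = bb * bb * S11 + (bb * (-a)) * S12 + ((-a) * bb) * S21 + (a * a) * S22 := by
      rw [hS0]
      rw [hsplit (fun x => ∑ y, (if X.Adj x y then f x * f y else 0))]
      have houter : ∀ s : Finset V,
          ∑ x ∈ s, ∑ y, (if X.Adj x y then f x * f y else 0)
            = ∑ x ∈ s, ∑ y ∈ Ω₁, (if X.Adj x y then f x * f y else 0)
              + ∑ x ∈ s, ∑ y ∈ Ω₂, (if X.Adj x y then f x * f y else 0) := by
        intro s
        rw [← Finset.sum_add_distrib]
        exact Finset.sum_congr rfl fun x _ => hsplit _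
      rw [houter Ω₁, houter Ω₂]
      rw [hblock Ω₁ Ω₁ bb bb hf1 hf1, hblock Ω₁ Ω₂ bb (-a) hf1 hf2,
          hblock Ω₂ Ω₁ (-a) bb hf2 hf1, hblock Ω₂ Ω₂ (-a) (-a) hf2 hf2]
      rw [← hS11d, ← hS12d, ← hS21d, ← hS22d]
      ring
    have hab : a + bb = (Fintype.card V : ℝ) := by
      have h6 : (Ω₁ ∪ Ω₂).card = Ω₁.card + Ω₂.card := Finset.card_union_of_disjoint hdisj
      rw [hcover, Finset.card_univ] at h6
      rw [ha, hbb]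
      exact_mod_cast h6.symm
    rw [hSdecomp, hsum2] at hmain
    have hS11v : S11 = (k:ℝ) * a - E := by rw [← h12E]; linarith
    have hS22v : S22 = (k:ℝ) * bb - E := by rw [← h12E, ← h21]; linarith
    rw [hS11v, hS22v, h21, h12E] at hmain
    rw [← hab]
    nlinarith [hmain, hnpos, hab]
  · push_neg at hμk
    have h2 : (k:ℝ) - μ ≤ 0 := by linarith
    have h1 : ((k:ℝ) - μ) * a * bb ≤ 0 := by nlinarith [mul_nonneg ha0 hb0]
    linarith [mul_nonneg hE0 (le_of_lt hnpos), h1]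
end

section
/- Let G be a finite abelian group of order n (written additively) and let C be a (n,k,μ)-difference set in G (for every g ≠ 0, the number of pairs (c1,c2) ∈ C×C with g = c1 − c2 equals μ) with 2 ≤ k < n, μ ≥ 1, such that C = −C and 0 ∉ C. Then the Cayley graph Cay(G,C) is a Ramanujan graph. -/
open scoped Classical

/-- The Cayley graph of an additive group `G` with connection set `D`:
vertices are the elements of `G`, and `u`, `v` are adjacent iff `u - v ∈ D`
(for `0 ∉ D` and `D = -D` this is a simple graph). -/
def cayley {G : Type*} [AddGroup G] (D : Finset G) : SimpleGraph G :=
  SimpleGraph.fromRel (fun u v => u - v ∈ D)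

/-- `μ` is an eigenvalue of the (real) adjacency matrix of the finite graph `X`. -/
noncomputable def HasAdjEigenvalue {V : Type*} [Fintype V] (X : SimpleGraph V) (μ : ℝ) : Prop :=
  ∃ f : V → ℝ, f ≠ 0 ∧ (X.adjMatrix ℝ).mulVec f = μ • f

/-- A finite graph `X` is a `k`-regular Ramanujan graph: it is connected,
`k`-regular, and every adjacency eigenvalue `λ` with `|λ| ≠ k` satisfies
`|λ| ≤ 2√(k-1)`. -/
noncomputable def IsRamanujan {V : Type*} [Fintype V] (X : SimpleGraph V) (k : ℕ) : Prop :=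
  X.Connected ∧ X.IsRegularOfDegree k ∧
    ∀ μ : ℝ, HasAdjEigenvalue X μ → |μ| ≠ (k : ℝ) →
      |μ| ≤ 2 * Real.sqrt ((k : ℝ) - 1)

section Aux

set_option linter.unusedSectionVars false

variable {G : Type*} [AddCommGroup G] [Fintype G] (C : Finset G)

lemma cayley_adj (hsym : ∀ c ∈ C, -c ∈ C) (h0C : (0 : G) ∉ C) (u v : G) :
    (cayley C).Adj u v ↔ u - v ∈ C := by
  simp only [cayley, SimpleGraph.fromRel_adj]
  constructor
  · rintro ⟨hne, h | h⟩
    · exact h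
    · have := hsym _ h
      rwa [neg_sub] at this
  · intro h
    refine ⟨?_, Or.inl h⟩
    rintro rfl
    rw [sub_self] at h
    exact h0C h

lemma count_common {μ : ℕ} (hsym : ∀ c ∈ C, -c ∈ C)
    (hDS : ∀ g : G, g ≠ 0 →
      ((C ×ˢ C).filter (fun p => p.1 - p.2 = g)).card = μ)
    (v u : G) (hne : v ≠ u) :
    (Finset.univ.filter fun w : G => v - w ∈ C ∧ u - w ∈ C).card = μ := by
  rw [← hDS (v - u) (sub_ne_zero.2 hne)]
  apply Finset.card_nbij' (i := fun w => (v - w, u - w)) (j := fun p => v - p.1)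
  · intro w hw
    simp only [Finset.mem_coe, Finset.mem_filter, Finset.mem_univ, true_and] at hw
    simp only [Finset.mem_coe, Finset.mem_filter, Finset.mem_product]
    exact ⟨⟨hw.1, hw.2⟩, by abel⟩
  · intro p hp
    simp only [Finset.mem_coe, Finset.mem_filter, Finset.mem_product] at hp
    simp only [Finset.mem_coe, Finset.mem_filter, Finset.mem_univ, true_and]
    constructor
    · simpa using hp.1.1
    · have : u - (v - p.1) = p.2 := by
        have h2 : p.2 = p.1 - (v - u) := by rw [← hp.2]; abel
        rw [h2]; abel
    
      rw [this]; exact hp.1.2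
  · intro w _; exact sub_sub_cancel v w
  · intro p hp
    simp only [Finset.mem_coe, Finset.mem_filter, Finset.mem_product] at hp
    have h2 : p.2 = p.1 - (v - u) := by rw [← hp.2]; abel
    ext
    · simp
    · simp only
      rw [h2]; abel

end Aux

/-- If `C` is an `(n,k,μ)`-difference set in a finite abelian group `G` of
order `n` with `2 ≤ k < n` and `μ ≥ 1`, such that `C = -C` and `0 ∉ C`
(i.e. `C` is reversible), then the Cayley graph `Cay(G,C)` is a Ramanujan
graph. -/
theorem reversible_difference_set_ramanujan {G : Type*} [AddCommGroup G] [Fintype G]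
    (C : Finset G) (k μ : ℕ) (hkC : C.card = k)
    (hk2 : 2 ≤ k) (hkn : k < Fintype.card G) (hμ : 1 ≤ μ)
    (hDS : ∀ g : G, g ≠ 0 →
      ((C ×ˢ C).filter (fun p => p.1 - p.2 = g)).card = μ)
    (hsym : ∀ c ∈ C, -c ∈ C) (h0C : (0 : G) ∉ C) :
    IsRamanujan (cayley C) k := by
  have hadj := cayley_adj C hsym h0C
  -- regularity
  have hreg : (cayley C).IsRegularOfDegree k := by
    intro v
    have himg : (cayley C).neighborFinset v = C.image (fun c => v - c) := by
      ext u
      simp only [SimpleGraph.mem_neighborFinset, hadj, Finset.mem_image]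
      constructor
      · intro h; exact ⟨v - u, h, by abel⟩
      · rintro ⟨c, hc, rfl⟩; simpa using hc
    rw [SimpleGraph.degree, himg,
      Finset.card_image_of_injective _ (sub_right_injective), hkC]
  refine ⟨?_, hreg, ?_⟩
  · -- connected
    have hpos : 0 < Fintype.card G := lt_of_le_of_lt (Nat.zero_le k) hkn
    have hne : Nonempty G := Fintype.card_pos_iff.mp hpos
    haveI : Nonempty G := hne
    apply SimpleGraph.Connected.mk
    intro u v
    by_cases h : u = v
    · subst h; exact SimpleGraph.Reachable.refl u
    · have hg : u - v ≠ 0 := sub_ne_zero.2 h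
      have hcard : 0 < ((C ×ˢ C).filter (fun p => p.1 - p.2 = u - v)).card := by
        rw [hDS _ hg]; omega
      obtain ⟨⟨c1, c2⟩, hp⟩ := Finset.card_pos.mp hcard
      simp only [Finset.mem_filter, Finset.mem_product] at hp
      have h1 : (cayley C).Adj u (v + c1) := by
        rw [hadj]
        have heq : u - (v + c1) = -c2 := by
          have h2 : c2 = c1 - (u - v) := by rw [← hp.2]; abel
          rw [h2]; abel
        rw [heq]; exact hsym _ hp.1.2
      have h2 : (cayley C).Adj (v + c1) v := by
        rw [hadj]; simpa using hp.1.1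
      exact (h1.reachable).trans h2.reachable
  · -- eigenvalue bound
    rintro lam ⟨f, hf0, hf⟩ habs
    set A := (cayley C).adjMatrix ℝ with hA
    set s := ∑ v, f v with hsdef
    have hcol : ∀ u : G, ∑ w, A w u = (k : ℝ) := by
      intro u
      have hsymAdj : ∀ w, A w u = A u w := fun w => by
        simp [hA, SimpleGraph.adjMatrix_apply, (cayley C).adj_comm]
      simp_rw [hsymAdj]
      have h1 : ∑ w, A u w = ((Finset.univ.filter ((cayley C).Adj u)).card : ℝ) := by
        simp [hA, SimpleGraph.adjMatrix_apply, Finset.sum_boole]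
      rw [h1, ← SimpleGraph.neighborFinset_eq_filter]
      exact_mod_cast hreg u
    have hk_s : (k : ℝ) * s = lam * s := by
      have h1 : ∑ v, (A.mulVec f) v = lam * s := by
        rw [hf]
        simp only [Pi.smul_apply, smul_eq_mul]
        rw [hsdef, Finset.mul_sum]
      have h2 : ∑ v, (A.mulVec f) v = (k : ℝ) * s := by
        simp only [Matrix.mulVec, dotProduct]
        rw [Finset.sum_comm]
        calc ∑ w, ∑ v, A v w * f w = ∑ w, (k : ℝ) * f w := by
              refine Finset.sum_congr rfl fun w _ => ?_
              rw [← Finset.sum_mul, hcol w]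
          _ = (k : ℝ) * s := by rw [← Finset.mul_sum]
      rw [← h1, h2]
    have hs0 : s = 0 := by
      by_contra hs
      have hlk : (k : ℝ) = lam := mul_right_cancel₀ hs hk_s
      apply habs
      rw [← hlk, abs_of_nonneg (by positivity)]
    obtain ⟨v, hv⟩ := Function.ne_iff.mp hf0
    have hAA : ∀ u : G, (A * A) v u = if v = u then (k : ℝ) else (μ : ℝ) := by
      intro u
      rw [Matrix.mul_apply]
      have hterm : ∀ w, A v w * A w u = if (v - w ∈ C ∧ u - w ∈ C) then (1 : ℝ) else 0 := by
        intro w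
        have hx1 : A v w = if v - w ∈ C then (1 : ℝ) else 0 := by
          simp [hA, SimpleGraph.adjMatrix_apply, hadj]
        have hx2 : A w u = if u - w ∈ C then (1 : ℝ) else 0 := by
          have hiff : (cayley C).Adj w u ↔ u - w ∈ C := by rw [(cayley C).adj_comm, hadj]
          simp [hA, SimpleGraph.adjMatrix_apply, hiff]
        rw [hx1, hx2]
        by_cases p : v - w ∈ C <;> by_cases q : u - w ∈ C <;> simp [p, q]
      simp_rw [hterm]
      rw [Finset.sum_boole]
      by_cases hvu : v = u
      · subst hvu
        rw [if_pos rfl]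
        have hfe : (Finset.univ.filter fun w : G => v - w ∈ C ∧ v - w ∈ C)
            = (cayley C).neighborFinset v := by
          ext w; simp [SimpleGraph.mem_neighborFinset, hadj]
        rw [hfe]
        exact_mod_cast hreg v
      · rw [if_neg hvu, count_common C hsym hDS v u hvu]
    have h2 : (A * A).mulVec f = (lam * lam) • f := by
      rw [← Matrix.mulVec_mulVec, hf, Matrix.mulVec_smul, hf, smul_smul]
    have hent : ((A * A).mulVec f) v = (k : ℝ) * f v + (μ : ℝ) * (s - f v) := by
      simp only [Matrix.mulVec, dotProduct]
      calc ∑ u, (A * A) v u * f u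
          = ∑ u, ((μ : ℝ) * f u + (if v = u then ((k : ℝ) - μ) else 0) * f u) := by
            refine Finset.sum_congr rfl fun u _ => ?_
            rw [hAA u]
            by_cases h : v = u <;> simp [h] <;> ring
        _ = (μ : ℝ) * s + ((k : ℝ) - μ) * f v := by
            rw [Finset.sum_add_distrib, ← Finset.mul_sum]
            congr 1
            simp_rw [ite_mul, zero_mul]
            rw [Finset.sum_ite_eq]
            simp
        _ = (k : ℝ) * f v + (μ : ℝ) * (s - f v) := by ring
    have heq : (lam * lam) * f v = ((k : ℝ) - μ) * f v := by
      have hcv := congrFun h2 v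
      rw [hent] at hcv
      rw [hs0] at hcv
      simp only [Pi.smul_apply, smul_eq_mul] at hcv
      nlinarith [hcv]
    have hlam2 : lam ^ 2 = (k : ℝ) - μ := by
      have := mul_right_cancel₀ hv heq
      nlinarith [this]
    have hμ1 : (1 : ℝ) ≤ (μ : ℝ) := by exact_mod_cast hμ
    have hb : lam ^ 2 ≤ (k : ℝ) - 1 := by linarith
    calc |lam| = Real.sqrt (lam ^ 2) := (Real.sqrt_sq_eq_abs lam).symm
      _ ≤ Real.sqrt ((k : ℝ) - 1) := Real.sqrt_le_sqrt hb
      _ ≤ 2 * Real.sqrt ((k : ℝ) - 1) := by nlinarith [Real.sqrt_nonneg ((k : ℝ) - 1)]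
end

section
/- For every positive integer t, the elementary abelian 2-group G = (ℤ/2ℤ)^{2t+2} contains a Hadamard difference set C with parameters (2^{2t+2}, 2^{2t+1} − 2^t, 2^{2t} − 2^t) such that 0 ∉ C, and the Cayley graph Cay(G,C) is a Ramanujan graph. -/
open scoped Classical

open Finset

namespace EAH

def chi : ZMod 2 → ℤ := fun c => if c = 1 then -1 else 1

lemma chi_add : ∀ a b : ZMod 2, chi (a + b) = chi a * chi b := by decide

lemma chi_sum {ι : Type*} (s : Finset ι) (f : ι → ZMod 2) :
    chi (∑ i ∈ s, f i) = ∏ i ∈ s, chi (f i) := by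
  induction s using Finset.cons_induction with
  | empty => simp [chi]
  | cons a s ha ih => rw [Finset.sum_cons, Finset.prod_cons, chi_add, ih]

variable (t : ℕ)

def idx (i : Fin (t+1)) (r : Fin 2) : Fin (2*t+2) :=
  ⟨2 * i.val + r.val, by have := i.isLt; have := r.isLt; omega⟩

def Qf (x : Fin (2*t+2) → ZMod 2) : ZMod 2 :=
  ∑ i : Fin (t+1), x (idx t i 0) * x (idx t i 1)

def blk : (Fin (t+1) → ZMod 2 × ZMod 2) ≃ (Fin (2*t+2) → ZMod 2) where
  toFun y := fun j => if j.val % 2 = 0 then (y ⟨j.val / 2, by have := j.isLt; omega⟩).1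
                      else (y ⟨j.val / 2, by have := j.isLt; omega⟩).2
  invFun x := fun i => (x (idx t i 0), x (idx t i 1))
  left_inv y := by
    funext i
    have h0 : (2 * i.val + (0:Fin 2).val) % 2 = 0 := by omega
    have h1 : ¬ ((2 * i.val + (1:Fin 2).val) % 2 = 0) := by omega
    simp only [idx, if_pos h0, if_neg h1]
    have e0 : (⟨(2 * i.val + (0:Fin 2).val) / 2, by omega⟩ : Fin (t+1)) = i := by
      apply Fin.ext; simp only [Fin.val_mk]; omega
    have e1 : (⟨(2 * i.val + (1:Fin 2).val) / 2, by omega⟩ : Fin (t+1)) = i := by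
      apply Fin.ext; simp only [Fin.val_mk]; omega
    rw [e0, e1]
    exact Prod.ext (if_pos (by omega)) (if_neg (by omega))
  right_inv x := by
    funext j
    by_cases h : j.val % 2 = 0
    · simp only [if_pos h, idx]
      congr 1
      apply Fin.ext; simp only [Fin.val_mk]; omega
    · simp only [if_neg h, idx]
      congr 1
      apply Fin.ext; simp only [Fin.val_mk]; omega

lemma blk_idx0 (y : Fin (t+1) → ZMod 2 × ZMod 2) (i : Fin (t+1)) :
    blk t y (idx t i 0) = (y i).1 := by
  have := congrFun ((blk t).left_inv y) i
  exact (congrArg Prod.fst this)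

lemma blk_idx1 (y : Fin (t+1) → ZMod 2 × ZMod 2) (i : Fin (t+1)) :
    blk t y (idx t i 1) = (y i).2 := by
  have := congrFun ((blk t).left_inv y) i
  exact (congrArg Prod.snd this)

lemma sum_prod_blocks (g : Fin (t+1) → ZMod 2 × ZMod 2 → ℤ) :
    ∑ x : Fin (2*t+2) → ZMod 2, ∏ i : Fin (t+1), g i (x (idx t i 0), x (idx t i 1))
      = ∏ i : Fin (t+1), ∑ p : ZMod 2 × ZMod 2, g i p := by
  rw [← Fintype.sum_equiv (blk t) (fun y => ∏ i, g i (y i))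
      (fun x => ∏ i, g i (x (idx t i 0), x (idx t i 1)))
      (fun y => by simp only [blk_idx0, blk_idx1])]
  rw [Finset.prod_univ_sum]
  rw [Fintype.piFinset_univ]

lemma sum_chi_pair : ∑ p : ZMod 2 × ZMod 2, chi (p.1 * p.2) = 2 := by decide

lemma sum_chi_lin : ∀ a b : ZMod 2, ¬ (a = 0 ∧ b = 0) →
    ∑ p : ZMod 2 × ZMod 2, chi (p.1 * b + a * p.2 + a * b) = 0 := by decide

lemma sum_chi_Q : ∑ x : Fin (2*t+2) → ZMod 2, chi (Qf t x) = 2^(t+1) := by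
  have h : ∀ x, chi (Qf t x) = ∏ i : Fin (t+1), chi (x (idx t i 0) * x (idx t i 1)) :=
    fun x => chi_sum _ _
  rw [Fintype.sum_congr _ _ h, sum_prod_blocks t (fun i p => chi (p.1 * p.2))]
  simp [sum_chi_pair]

lemma key4 : ∀ a b c d : ZMod 2, a*b + (a+c)*(b+d) = a*d + c*b + c*d := by decide

lemma sum_chi_auto (g : Fin (2*t+2) → ZMod 2) (hg : g ≠ 0) :
    ∑ x : Fin (2*t+2) → ZMod 2, chi (Qf t x) * chi (Qf t (x + g)) = 0 := by
  have h : ∀ x, chi (Qf t x) * chi (Qf t (x + g)) =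
      ∏ i : Fin (t+1), chi (x (idx t i 0) * g (idx t i 1) + g (idx t i 0) * x (idx t i 1)
        + g (idx t i 0) * g (idx t i 1)) := by
    intro x
    rw [← chi_add]
    have hq : Qf t x + Qf t (x + g) = ∑ i : Fin (t+1),
        (x (idx t i 0) * g (idx t i 1) + g (idx t i 0) * x (idx t i 1)
          + g (idx t i 0) * g (idx t i 1)) := by
      rw [Qf, Qf, ← Finset.sum_add_distrib]
      refine Finset.sum_congr rfl fun i _ => ?_
      simp only [Pi.add_apply]
      exact key4 _ _ _ _
    rw [hq, chi_sum]
  rw [Fintype.sum_congr _ _ h,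
    sum_prod_blocks t (fun i p => chi (p.1 * g (idx t i 1) + g (idx t i 0) * p.2
      + g (idx t i 0) * g (idx t i 1)))]
  obtain ⟨j, hj⟩ := Function.ne_iff.mp hg
  have hjlt := j.isLt
  set i : Fin (t+1) := ⟨j.val / 2, by omega⟩ with hi
  apply Finset.prod_eq_zero (Finset.mem_univ i)
  apply sum_chi_lin
  rintro ⟨h0, h1⟩
  have hj' : j = idx t i 0 ∨ j = idx t i 1 := by
    by_cases hpar : j.val % 2 = 0
    · left; apply Fin.ext; simp only [idx, hi, Fin.val_mk]; omega
    · right; apply Fin.ext; simp only [idx, hi, Fin.val_mk]; omega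
  rcases hj' with rfl' | rfl'
  · rw [rfl'] at hj; simp [h0] at hj
  · rw [rfl'] at hj; simp [h1] at hj

def Cset : Finset (Fin (2*t+2) → ZMod 2) := univ.filter (fun x => Qf t x = 1)

lemma ind2 : ∀ c : ZMod 2, 2 * (if c = 1 then (1:ℤ) else 0) = 1 - chi c := by decide

lemma ind4 : ∀ c d : ZMod 2,
    4 * (if c = 1 ∧ d = 1 then (1:ℤ) else 0) = (1 - chi c) * (1 - chi d) := by decide

lemma sub_eq_add' (u v : Fin (2*t+2) → ZMod 2) : u - v = u + v := by
  funext j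
  have h : ∀ a b : ZMod 2, a - b = a + b := by decide
  exact h _ _

lemma card_univ_G : (Fintype.card (Fin (2*t+2) → ZMod 2)) = 2^(2*t+2) := by
  simp [Fintype.card_fun]

lemma zero_not_mem_Cset : (0 : Fin (2*t+2) → ZMod 2) ∉ Cset t := by
  rw [Cset, Finset.mem_filter]
  simp [Qf]

lemma card_Cset_int : ((Cset t).card : ℤ) = 2^(2*t+1) - 2^t := by
  have h : (2:ℤ) * (Cset t).card = 2^(2*t+2) - 2^(t+1) := by
    have hb : (((univ.filter (fun x => Qf t x = 1)).card : ℤ))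
        = ∑ x : Fin (2*t+2) → ZMod 2, (if Qf t x = 1 then (1:ℤ) else 0) :=
      (Finset.sum_boole _ _).symm
    rw [Cset, hb, Finset.mul_sum]
    have h2 : ∀ x : Fin (2*t+2) → ZMod 2,
        (2:ℤ) * (if Qf t x = 1 then (1:ℤ) else 0) = 1 - chi (Qf t x) := fun x => ind2 _
    rw [Fintype.sum_congr _ _ h2, Finset.sum_sub_distrib, Finset.sum_const, sum_chi_Q]
    simp only [Finset.card_univ, card_univ_G, nsmul_eq_mul, mul_one]
    push_cast
    ring
  have e1 : (2:ℤ)^(2*t+2) = 2 * 2^(2*t+1) := by rw [pow_succ]; ring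
  have e2 : (2:ℤ)^(t+1) = 2 * 2^t := by rw [pow_succ]; ring
  linarith

lemma card_Cset : (Cset t).card = 2^(2*t+1) - 2^t := by
  have hle : 2^t ≤ 2^(2*t+1) := Nat.pow_le_pow_right (by norm_num) (by omega)
  have h : ((2^(2*t+1) - 2^t : ℕ) : ℤ) = ((Cset t).card : ℤ) := by
    rw [Nat.cast_sub hle, card_Cset_int]; push_cast; ring
  exact (Nat.cast_injective h).symm

lemma sum_chi_Q_shift (g : Fin (2*t+2) → ZMod 2) :
    ∑ x : Fin (2*t+2) → ZMod 2, chi (Qf t (x + g)) = 2^(t+1) := by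
  rw [Fintype.sum_equiv (Equiv.addRight g) (fun x => chi (Qf t (x + g)))
    (fun y => chi (Qf t y)) (fun x => rfl)]
  exact sum_chi_Q t

lemma pair_count (g : Fin (2*t+2) → ZMod 2) (hg : g ≠ 0) :
    (((Cset t) ×ˢ (Cset t)).filter (fun p => p.1 - p.2 = g)).card = 2^(2*t) - 2^t := by
  have hbij : (((Cset t) ×ˢ (Cset t)).filter (fun p => p.1 - p.2 = g)).card
      = (univ.filter (fun x : Fin (2*t+2) → ZMod 2 => Qf t x = 1 ∧ Qf t (x + g) = 1)).card := by
    apply Finset.card_bij' (fun p _ => p.2) (fun x _ => (x + g, x))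
    · intro p hp
      simp only [Finset.mem_filter, Finset.mem_product, Cset, Finset.mem_univ,
        true_and] at hp ⊢
      obtain ⟨⟨h1, h2⟩, h3⟩ := hp
      refine ⟨h2, ?_⟩
      have hp1 : p.2 + g = p.1 := by rw [sub_eq_iff_eq_add.mp h3]; abel
      rw [hp1]; exact h1
    · intro x hx
      simp only [Finset.mem_filter, Finset.mem_product, Cset, Finset.mem_univ,
        true_and] at hx ⊢
      exact ⟨⟨hx.2, hx.1⟩, add_sub_cancel_left x g⟩
    · intro p hp
      simp only [Finset.mem_filter, Finset.mem_product] at hp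
      have hp1 : p.2 + g = p.1 := by rw [sub_eq_iff_eq_add.mp hp.2]; abel
      exact Prod.ext hp1 rfl
    · intro x hx; rfl
  rw [hbij]
  have hM : (4:ℤ) * ((univ.filter
      (fun x : Fin (2*t+2) → ZMod 2 => Qf t x = 1 ∧ Qf t (x + g) = 1)).card : ℤ)
      = 2^(2*t+2) - 2^(t+2) := by
    have hb : (((univ.filter (fun x : Fin (2*t+2) → ZMod 2 =>
        Qf t x = 1 ∧ Qf t (x + g) = 1)).card : ℤ))
        = ∑ x : Fin (2*t+2) → ZMod 2,
            (if Qf t x = 1 ∧ Qf t (x + g) = 1 then (1:ℤ) else 0) :=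
      (Finset.sum_boole _ _).symm
    rw [hb, Finset.mul_sum]
    have h4 : ∀ x : Fin (2*t+2) → ZMod 2,
        (4:ℤ) * (if Qf t x = 1 ∧ Qf t (x + g) = 1 then (1:ℤ) else 0)
          = 1 - chi (Qf t x) - chi (Qf t (x + g)) + chi (Qf t x) * chi (Qf t (x + g)) := by
      intro x
      rw [ind4]
      ring
    rw [Fintype.sum_congr _ _ h4, Finset.sum_add_distrib, Finset.sum_sub_distrib,
      Finset.sum_sub_distrib, Finset.sum_const, sum_chi_Q, sum_chi_Q_shift, sum_chi_auto t g hg]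
    simp only [Finset.card_univ, card_univ_G, nsmul_eq_mul, mul_one]
    push_cast
    ring
  have hle : 2^t ≤ 2^(2*t) := Nat.pow_le_pow_right (by norm_num) (by omega)
  have h : ((2^(2*t) - 2^t : ℕ) : ℤ) = (((univ.filter
      (fun x : Fin (2*t+2) → ZMod 2 => Qf t x = 1 ∧ Qf t (x + g) = 1)).card : ℤ)) := by
    rw [Nat.cast_sub hle]
    push_cast
    push_cast at hM
    have e1 : (2:ℤ)^(2*t+2) = 4 * 2^(2*t) := by rw [pow_succ, pow_succ]; ring
    have e2 : (2:ℤ)^(t+2) = 4 * 2^t := by rw [pow_succ, pow_succ]; ring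
    linarith
  exact (Nat.cast_injective h).symm

lemma sub_comm' (u v : Fin (2*t+2) → ZMod 2) : u - v = v - u := by
  rw [sub_eq_add' t u v, sub_eq_add' t v u]; exact add_comm u v

lemma cayley_adj (u v : Fin (2*t+2) → ZMod 2) :
    (cayley (Cset t)).Adj u v ↔ u - v ∈ Cset t := by
  rw [cayley, SimpleGraph.fromRel_adj]
  constructor
  · rintro ⟨hne, h | h⟩
    · exact h
    · rwa [sub_comm' t v u] at h
  · intro h
    have hne : u ≠ v := by
      rintro rfl
      rw [sub_self] at h
      exact zero_not_mem_Cset t h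
    exact ⟨hne, Or.inl h⟩

lemma cayley_regular : (cayley (Cset t)).IsRegularOfDegree (2^(2*t+1) - 2^t) := by
  intro u
  rw [← card_Cset t, SimpleGraph.degree]
  apply Finset.card_bij (fun w _ => u - w)
  · intro w hw
    rw [SimpleGraph.mem_neighborFinset, cayley_adj] at hw
    exact hw
  · intro a ha b hb h
    have : a = u - (u - a) := (sub_sub_cancel u a).symm
    rw [this, h, sub_sub_cancel]
  · intro c hc
    refine ⟨u - c, ?_, sub_sub_cancel u c⟩
    rw [SimpleGraph.mem_neighborFinset, cayley_adj, sub_sub_cancel]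
    exact hc

lemma common_nbrs (u v : Fin (2*t+2) → ZMod 2) (huv : u ≠ v) :
    (univ.filter (fun w => (cayley (Cset t)).Adj u w ∧ (cayley (Cset t)).Adj w v)).card
      = 2^(2*t) - 2^t := by
  rw [← pair_count t (v - u) (sub_ne_zero_of_ne (Ne.symm huv))]
  apply Finset.card_bij (fun w _ => (w - u, w - v))
  · intro w hw
    simp only [Finset.mem_filter, Finset.mem_univ, true_and] at hw
    rw [cayley_adj] at hw
    rw [cayley_adj] at hw
    simp only [Finset.mem_filter, Finset.mem_product]
    refine ⟨⟨?_, hw.2⟩, by abel⟩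
    rw [← sub_comm' t u w]
    exact hw.1
  · intro a ha b hb h
    have h1 := congrArg Prod.fst h
    simp only at h1
    have : a = (a - u) + u := (sub_add_cancel a u).symm
    rw [this, h1, sub_add_cancel]
  · intro p hp
    simp only [Finset.mem_filter, Finset.mem_product] at hp
    obtain ⟨⟨hp1, hp2⟩, hp3⟩ := hp
    refine ⟨u + p.1, ?_, ?_⟩
    · simp only [Finset.mem_filter, Finset.mem_univ, true_and]
      rw [cayley_adj, cayley_adj]
      constructor
      · rw [sub_comm' t u (u + p.1), add_sub_cancel_left]
        exact hp1
      · have he : u + p.1 - v = p.2 := by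
          rw [sub_eq_iff_eq_add.mp hp3]
          abel
        rw [he]
        exact hp2
    · have he : u + p.1 - v = p.2 := by
        rw [sub_eq_iff_eq_add.mp hp3]
        abel
      rw [add_sub_cancel_left, he]

lemma cayley_connected (ht : 0 < t) : (cayley (Cset t)).Connected := by
  rw [SimpleGraph.connected_iff]
  refine ⟨fun u v => ?_, ⟨0⟩⟩
  by_cases h : u = v
  · subst h; exact SimpleGraph.Reachable.refl u
  · have hpos : 0 < 2^(2*t) - 2^t := by
      have h2 : 2^t < 2^(2*t) := Nat.pow_lt_pow_right (by norm_num) (by omega)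
      omega
    obtain ⟨w, hw⟩ := Finset.card_pos.mp (by rw [common_nbrs t u v h]; exact hpos)
    simp only [Finset.mem_filter, Finset.mem_univ, true_and] at hw
    exact hw.1.reachable.trans hw.2.reachable

lemma eig_sq (ht : 0 < t) (μ : ℝ) (h : HasAdjEigenvalue (cayley (Cset t)) μ)
    (hne : μ ≠ ((2^(2*t+1) - 2^t : ℕ) : ℝ)) : μ^2 = 2^(2*t) := by
  obtain ⟨f, hf0, hf⟩ := h
  set G := cayley (Cset t) with hG
  have hfe : ∀ u, ∑ w ∈ G.neighborFinset u, f w = μ * f u := by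
    intro u
    have h1 := congrFun hf u
    rw [SimpleGraph.adjMatrix_mulVec_apply] at h1
    simpa using h1
  have hreg := cayley_regular t
  set K : ℕ := 2^(2*t+1) - 2^t with hK
  set M : ℕ := 2^(2*t) - 2^t with hM
  -- column sums: (K : ℝ) * ∑ f = μ * ∑ f
  have hT : (K:ℝ) * ∑ v, f v = μ * ∑ v, f v := by
    calc (K:ℝ) * ∑ v, f v = ∑ v, (K:ℝ) * f v := by rw [Finset.mul_sum]
    _ = ∑ v, ∑ u, (if G.Adj u v then f v else 0) := by
        refine Finset.sum_congr rfl fun v _ => ?_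
        have hfilt : (univ.filter (fun u => G.Adj u v)) = G.neighborFinset v := by
          rw [SimpleGraph.neighborFinset_eq_filter]
          exact Finset.filter_congr (fun u _ => by rw [SimpleGraph.adj_comm])
        rw [← Finset.sum_filter, hfilt, Finset.sum_const,
          show (G.neighborFinset v).card = K from hreg v, nsmul_eq_mul]
    _ = ∑ u, ∑ v, (if G.Adj u v then f v else 0) := Finset.sum_comm
    _ = ∑ u, ∑ w ∈ G.neighborFinset u, f w := by
        refine Finset.sum_congr rfl fun u _ => ?_
        rw [SimpleGraph.neighborFinset_eq_filter, Finset.sum_filter]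
    _ = ∑ u, μ * f u := Finset.sum_congr rfl fun u _ => hfe u
    _ = μ * ∑ v, f v := by rw [Finset.mul_sum]
  have hsum0 : ∑ v, f v = 0 := by
    by_contra hs
    exact hne (mul_right_cancel₀ hs hT.symm)
  -- two-step walk count
  have h2 : ∀ u, μ^2 * f u = ((K:ℝ) - (M:ℝ)) * f u := by
    intro u
    have step : μ^2 * f u = ∑ v, ((univ.filter
        (fun w => G.Adj u w ∧ G.Adj w v)).card : ℝ) * f v := by
      calc μ^2 * f u = μ * (μ * f u) := by ring
      _ = μ * ∑ w ∈ G.neighborFinset u, f w := by rw [hfe u]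
      _ = ∑ w ∈ G.neighborFinset u, μ * f w := by rw [Finset.mul_sum]
      _ = ∑ w ∈ G.neighborFinset u, ∑ v ∈ G.neighborFinset w, f v :=
          Finset.sum_congr rfl fun w _ => (hfe w).symm
      _ = ∑ w ∈ G.neighborFinset u, ∑ v, (if G.Adj w v then f v else 0) := by
          refine Finset.sum_congr rfl fun w _ => ?_
          rw [SimpleGraph.neighborFinset_eq_filter, Finset.sum_filter]
      _ = ∑ v, ∑ w ∈ G.neighborFinset u, (if G.Adj w v then f v else 0) :=
          Finset.sum_comm
      _ = ∑ v, ((univ.filter (fun w => G.Adj u w ∧ G.Adj w v)).card : ℝ) * f v := by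
          refine Finset.sum_congr rfl fun v _ => ?_
          rw [← Finset.sum_filter]
          rw [SimpleGraph.neighborFinset_eq_filter, Finset.filter_filter]
          rw [Finset.sum_const, nsmul_eq_mul]
    have hcard : ∀ v, ((univ.filter (fun w => G.Adj u w ∧ G.Adj w v)).card : ℝ)
        = if v = u then (K:ℝ) else (M:ℝ) := by
      intro v
      by_cases hvu : v = u
      · subst hvu
        have hfilt : (univ.filter (fun w => G.Adj v w ∧ G.Adj w v)) = G.neighborFinset v := by
          rw [SimpleGraph.neighborFinset_eq_filter]
          refine Finset.filter_congr (fun w _ => ?_)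
          constructor
          · exact fun hw => hw.1
          · exact fun hw => ⟨hw, hw.symm⟩
        rw [if_pos rfl, hfilt, show (G.neighborFinset v).card = K from hreg v]
      · rw [if_neg hvu, common_nbrs t u v (fun h => hvu h.symm)]
    calc μ^2 * f u = ∑ v, ((univ.filter (fun w => G.Adj u w ∧ G.Adj w v)).card : ℝ) * f v := step
    _ = ∑ v, (if v = u then (K:ℝ) else (M:ℝ)) * f v :=
        Finset.sum_congr rfl fun v _ => by rw [hcard v]
    _ = ∑ v, ((M:ℝ) * f v + if v = u then ((K:ℝ) - (M:ℝ)) * f v else 0) := by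
        refine Finset.sum_congr rfl fun v _ => ?_
        by_cases hvu : v = u <;> simp [hvu] <;> ring
    _ = (M:ℝ) * ∑ v, f v + ((K:ℝ) - (M:ℝ)) * f u := by
        rw [Finset.sum_add_distrib, Finset.sum_ite_eq' univ u (fun v => ((K:ℝ) - (M:ℝ)) * f v),
          Finset.mul_sum]
        simp
    _ = ((K:ℝ) - (M:ℝ)) * f u := by rw [hsum0]; ring
  obtain ⟨u, hu⟩ := Function.ne_iff.mp hf0
  have hμ2 : μ^2 = (K:ℝ) - (M:ℝ) := by
    have h3 := h2 u
    rcases mul_eq_mul_right_iff.mp h3 with h | h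
    · exact h
    · exact absurd h (by simpa using hu)
  rw [hμ2, hK, hM]
  have hle1 : 2^t ≤ 2^(2*t+1) := Nat.pow_le_pow_right (by norm_num) (by omega)
  have hle2 : 2^t ≤ 2^(2*t) := Nat.pow_le_pow_right (by norm_num) (by omega)
  rw [Nat.cast_sub hle1, Nat.cast_sub hle2]
  push_cast
  have e1 : (2:ℝ)^(2*t+1) = 2 * 2^(2*t) := by rw [pow_succ]; ring
  linarith

end EAH

/-- For every positive integer `t`, the elementary abelian 2-group
`(ℤ/2ℤ)^(2t+2)` contains a Hadamard difference set `C` with parameters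
`(2^(2t+2), 2^(2t+1) − 2^t, 2^(2t) − 2^t)` with `0 ∉ C`, and the Cayley graph
`Cay(G,C)` is a Ramanujan graph. -/
theorem elementary_abelian_hadamard_ramanujan (t : ℕ) (ht : 0 < t) :
    ∃ C : Finset (Fin (2 * t + 2) → ZMod 2),
      (0 : Fin (2 * t + 2) → ZMod 2) ∉ C ∧
      C.card = 2 ^ (2 * t + 1) - 2 ^ t ∧
      (∀ g : Fin (2 * t + 2) → ZMod 2, g ≠ 0 →
        ((C ×ˢ C).filter (fun p => p.1 - p.2 = g)).card
          = 2 ^ (2 * t) - 2 ^ t) ∧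
      IsRamanujan (cayley C) (2 ^ (2 * t + 1) - 2 ^ t) := by
  refine ⟨EAH.Cset t, EAH.zero_not_mem_Cset t, EAH.card_Cset t,
    fun g hg => EAH.pair_count t g hg,
    EAH.cayley_connected t ht, EAH.cayley_regular t, ?_⟩
  intro μ hμ habs
  have hKge : (0:ℝ) ≤ ((2^(2*t+1) - 2^t : ℕ):ℝ) := Nat.cast_nonneg _
  have hμK : μ ≠ ((2^(2*t+1) - 2^t : ℕ):ℝ) := fun h => habs (by rw [h, abs_of_nonneg hKge])
  have hsq := EAH.eig_sq t ht μ hμ hμK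
  have habs2 : |μ| = 2^t := by
    have h1 : |μ| = Real.sqrt (μ^2) := (Real.sqrt_sq_eq_abs μ).symm
    rw [h1, hsq, show (2:ℝ)^(2*t) = ((2:ℝ)^t)^2 by rw [← pow_mul, Nat.mul_comm],
      Real.sqrt_sq (by positivity)]
  have hKcast : ((2^(2*t+1) - 2^t : ℕ):ℝ) = 2^(2*t+1) - 2^t := by
    rw [Nat.cast_sub (Nat.pow_le_pow_right (by norm_num) (by omega))]
    push_cast
    ring
  have hineq : ((2:ℝ)^t)^2 ≤ 4 * (((2^(2*t+1) - 2^t : ℕ):ℝ) - 1) := by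
    rw [hKcast]
    have e1 : (2:ℝ)^(2*t+1) = 2 * 2^(2*t) := by rw [pow_succ]; ring
    have e2 : ((2:ℝ)^t)^2 = 2^(2*t) := by rw [← pow_mul, Nat.mul_comm]
    have h3 : (2:ℝ)^t ≤ 2^(2*t) := by
      apply pow_le_pow_right₀ (by norm_num) (by omega)
    have h4 : (4:ℝ) ≤ 2^(2*t) := by
      calc (4:ℝ) = 2^2 := by norm_num
      _ ≤ 2^(2*t) := by apply pow_le_pow_right₀ (by norm_num) (by omega)
    linarith
  calc |μ| = 2^t := habs2
  _ = Real.sqrt (((2:ℝ)^t)^2) := (Real.sqrt_sq (by positivity)).symm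
  _ ≤ Real.sqrt (4 * (((2^(2*t+1) - 2^t : ℕ):ℝ) - 1)) := Real.sqrt_le_sqrt hineq
  _ = 2 * Real.sqrt (((2^(2*t+1) - 2^t : ℕ):ℝ) - 1) := by
      rw [show (4:ℝ) = 2^2 by norm_num, Real.sqrt_mul (by positivity),
        Real.sqrt_sq (by norm_num)]
end

section
/- Let q = 2^m with m ≥ 1 and let D = {z ∈ F_q : z ≠ 0, Tr_m(z) = Tr_m(z^{−1}) = 1}. Then 4·|D| = k_m(1) + 2^m + 1, where k_m(1) = ∑_{x ∈ F_q^*} (−1)^{Tr_m(x + x^{−1})}. -/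
open scoped Classical

noncomputable instance (m : ℕ) : Fintype (GaloisField 2 m) := Fintype.ofFinite _

/-- The binary Kloosterman sum `k_m(a) = ∑_{x ∈ F_{2^m}^*} (−1)^{Tr_m(ax + x⁻¹)}`,
where `Tr_m` is the absolute trace of `F_{2^m} = GaloisField 2 m` over `F_2` and
`(−1)^c` for `c ∈ F_2` means `1` if `c = 0` and `−1` if `c = 1`. -/
noncomputable def kloos (m : ℕ) (a : GaloisField 2 m) : ℤ :=
  ∑ x ∈ Finset.univ.filter (fun x : GaloisField 2 m => x ≠ 0),
    (-1 : ℤ) ^ ((Algebra.trace (ZMod 2) (GaloisField 2 m)) (a * x + x⁻¹)).val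

/-- The set `D = {z ∈ F_{2^m} : z ≠ 0, Tr_m(z) = Tr_m(z⁻¹) = 1}`. -/
noncomputable def Dset (m : ℕ) : Finset (GaloisField 2 m) :=
  Finset.univ.filter (fun z : GaloisField 2 m => z ≠ 0 ∧
    Algebra.trace (ZMod 2) (GaloisField 2 m) z = 1 ∧
    Algebra.trace (ZMod 2) (GaloisField 2 m) z⁻¹ = 1)

/-- For `q = 2^m` and `D = {z ∈ F_q : z ≠ 0, Tr_m(z) = Tr_m(z⁻¹) = 1}`,
one has `4·|D| = k_m(1) + 2^m + 1`. -/
theorem card_Dset (m : ℕ) (hm : 1 ≤ m) :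
    4 * ((Dset m).card : ℤ) = kloos m 1 + 2 ^ m + 1 := by
  classical
  set F := GaloisField 2 m with hF
  set T : F → ZMod 2 := fun x => Algebra.trace (ZMod 2) F x with hTdef
  have hcard : Fintype.card F = 2 ^ m := by
    rw [← Nat.card_eq_fintype_card]
    exact GaloisField.card 2 m (by omega)
  have hsurj : Function.Surjective (Algebra.trace (ZMod 2) F) :=
    Algebra.trace_surjective (ZMod 2) F
  obtain ⟨x₀, hx₀⟩ := hsurj 1
  set S : Finset F := Finset.univ.filter (fun x => x ≠ 0) with hS
  have hT0 : T 0 = 0 := by simp [hTdef]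
  -- sign lemmas over ZMod 2
  have hsign : ∀ c : ZMod 2, (-1 : ℤ) ^ c.val = 1 - 2 * (c.val : ℤ) := by decide
  have hmul : ∀ a b : ZMod 2, (-1 : ℤ) ^ (a + b).val
      = (1 - 2 * (a.val : ℤ)) * (1 - 2 * (b.val : ℤ)) := by decide
  have hval1 : ∀ c : ZMod 2, ((c.val : ℤ)) = if c = 1 then 1 else 0 := by decide
  have hvalmul : ∀ c d : ZMod 2, (c.val : ℤ) * (d.val : ℤ)
      = if c = 1 ∧ d = 1 then 1 else 0 := by decide
  -- number of elements of trace one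
  have hbij : (Finset.univ.filter fun x : F => T x = 0).card
      = (Finset.univ.filter fun x : F => T x = 1).card := by
    apply Finset.card_bij (fun x _ => x + x₀)
    · intro a ha
      simp only [Finset.mem_filter, Finset.mem_univ, true_and] at ha ⊢
      simp [hTdef, map_add, hTdef ▸ ha, hx₀]
    · intro a _ b _ hab
      exact add_right_cancel hab
    · intro b hb
      simp only [Finset.mem_filter, Finset.mem_univ, true_and] at hb
      refine ⟨b + x₀, ?_, ?_⟩
      · simp only [Finset.mem_filter, Finset.mem_univ, true_and]
        have h2 : (1 : ZMod 2) + 1 = 0 := by decide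
        simp [hTdef, map_add, hTdef ▸ hb, hx₀, h2]
      · rw [add_assoc, CharTwo.add_self_eq_zero, add_zero]
  have hsplit : (Finset.univ.filter fun x : F => T x = 0).card
      + (Finset.univ.filter fun x : F => T x = 1).card = 2 ^ m := by
    have key := Finset.card_filter_add_card_filter_not
      (s := (Finset.univ : Finset F)) (p := fun x => T x = 0)
    rw [Finset.card_univ, hcard] at key
    have heq : (Finset.univ.filter fun a : F => ¬ T a = 0)
        = Finset.univ.filter fun x : F => T x = 1 := by
      apply Finset.filter_congr
      intro x _
      have : ∀ c : ZMod 2, (¬ c = 0) ↔ c = 1 := by decide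
      simp [this]
    rw [heq] at key
    exact key
  set N : ℕ := (Finset.univ.filter fun x : F => T x = 1).card with hN
  have h2N : 2 * N = 2 ^ m := by omega
  -- the trace-one set consists of nonzero elements
  have hfilter1 : S.filter (fun x => T x = 1) = Finset.univ.filter fun x : F => T x = 1 := by
    ext x
    simp only [hS, Finset.filter_filter, Finset.mem_filter, Finset.mem_univ, true_and]
    constructor
    · rintro ⟨-, h⟩; exact h
    · intro h
      refine ⟨?_, h⟩
      rintro rfl
      rw [hT0] at h
      exact absurd h (by decide)
  -- sums of indicator values
  have hsumA : ∑ x ∈ S, ((T x).val : ℤ) = (N : ℤ) := by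
    have : ∑ x ∈ S, ((T x).val : ℤ) = ∑ x ∈ S, if T x = 1 then (1 : ℤ) else 0 :=
      Finset.sum_congr rfl fun x _ => hval1 _
    rw [this, Finset.sum_boole, hfilter1]
  have hsumB : ∑ x ∈ S, ((T x⁻¹).val : ℤ) = (N : ℤ) := by
    rw [← hsumA]
    apply Finset.sum_nbij' (fun x => x⁻¹) (fun x => x⁻¹)
    · intro a ha
      simp only [hS, Finset.mem_filter, Finset.mem_univ, true_and] at ha ⊢
      exact inv_ne_zero ha
    · intro a ha
      simp only [hS, Finset.mem_filter, Finset.mem_univ, true_and] at ha ⊢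
      exact inv_ne_zero ha
    · intro a _; exact inv_inv a
    · intro a _; exact inv_inv a
    · intro a _; rfl
  have hsumAB : ∑ x ∈ S, ((T x).val : ℤ) * ((T x⁻¹).val : ℤ) = ((Dset m).card : ℤ) := by
    have : ∑ x ∈ S, ((T x).val : ℤ) * ((T x⁻¹).val : ℤ)
        = ∑ x ∈ S, if T x = 1 ∧ T x⁻¹ = 1 then (1 : ℤ) else 0 :=
      Finset.sum_congr rfl fun x _ => hvalmul _ _
    rw [this, Finset.sum_boole]
    congr 2
    ext x
    simp only [hS, Dset, Finset.filter_filter, Finset.mem_filter, Finset.mem_univ, true_and,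
      hTdef]
    exact Iff.rfl
  have hScard : (S.card : ℤ) = 2 ^ m - 1 := by
    have h1 : S = Finset.univ.erase (0 : F) := by
      rw [hS, Finset.filter_ne']
    have h2 : S.card = 2 ^ m - 1 := by
      rw [h1, Finset.card_erase_of_mem (Finset.mem_univ _), Finset.card_univ, hcard]
    rw [h2, Nat.cast_sub (Nat.one_le_two_pow)]
    push_cast
    ring
  -- rewrite the Kloosterman sum
  have hkl : kloos m 1 = ∑ x ∈ S,
      ((1 - 2 * ((T x).val : ℤ)) * (1 - 2 * ((T x⁻¹).val : ℤ))) := by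
    unfold kloos
    apply Finset.sum_congr rfl
    intro x _
    rw [one_mul, map_add, hmul]
  have hexp : kloos m 1 = (S.card : ℤ) - 2 * (N : ℤ) - 2 * (N : ℤ)
      + 4 * ((Dset m).card : ℤ) := by
    rw [hkl]
    have : ∀ x ∈ S, (1 - 2 * ((T x).val : ℤ)) * (1 - 2 * ((T x⁻¹).val : ℤ))
        = 1 - 2 * ((T x).val : ℤ) - 2 * ((T x⁻¹).val : ℤ)
          + 4 * (((T x).val : ℤ) * ((T x⁻¹).val : ℤ)) := by
      intro x _; ring
    rw [Finset.sum_congr rfl this]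
    simp only [Finset.sum_add_distrib, Finset.sum_sub_distrib, ← Finset.mul_sum,
      Finset.sum_const, nsmul_eq_mul, mul_one, hsumA, hsumB, hsumAB]
  have h2N' : 2 * (N : ℤ) = 2 ^ m := by exact_mod_cast h2N
  rw [hexp, hScard]
  linarith
end

section
/- Let q = 2^m with m ≥ 1 and let D = {z ∈ F_q : z ≠ 0, Tr_m(z) = Tr_m(z^{−1}) = 1}. For a ∈ F_q, define χ_a(D) = ∑_{z ∈ D} (−1)^{Tr_m(az)}. Then χ_1(D) = −(2^m + 1 + k_m(1))/4, and for every a ∈ F_q with a ≠ 0 and a ≠ 1, χ_a(D) = (k_m(a+1) − k_m(a))/4. -/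
open scoped Classical

/-- The character sum `χ_a(D) = ∑_{z ∈ D} (−1)^{Tr_m(az)}`. -/
noncomputable def chiD (m : ℕ) (a : GaloisField 2 m) : ℤ :=
  ∑ z ∈ Dset m,
    (-1 : ℤ) ^ ((Algebra.trace (ZMod 2) (GaloisField 2 m)) (a * z)).val

lemma sign_add' (u v : ZMod 2) :
    ((-1 : ℤ) ^ (u + v).val) = (-1) ^ u.val * (-1) ^ v.val := by revert u v; decide

lemma point_lemma' (u v w : ZMod 2) :
    4 * (if u = 1 ∧ v = 1 then (-1 : ℤ) ^ w.val else 0) =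
      (-1) ^ w.val - (-1) ^ (w + u).val - (-1) ^ (w + v).val + (-1) ^ (w + u + v).val := by
  revert u v w; decide

section Aux

variable (m : ℕ)

local notation "F" => GaloisField 2 m
local notation "Tr" => Algebra.trace (ZMod 2) (GaloisField 2 m)

/-- Auxiliary: `T m c = ∑_{z ≠ 0} (−1)^{Tr(cz)}`. -/
noncomputable def T (c : F) : ℤ :=
  ∑ z ∈ Finset.univ.filter (fun z : F => z ≠ 0), (-1 : ℤ) ^ (Tr (c * z)).val

lemma sum_split (f : F → ℤ) :
    ∑ z ∈ Finset.univ.filter (fun z : F => z ≠ 0), f z = (∑ z : F, f z) - f 0 := by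
  rw [Finset.filter_ne', ← Finset.sum_erase_add Finset.univ f (Finset.mem_univ 0)]
  ring

lemma sum_char_all : ∑ z : F, (-1 : ℤ) ^ (Tr z).val = 0 := by
  obtain ⟨c, hc⟩ := Algebra.trace_surjective (ZMod 2) F 1
  have key : ∑ z : F, (-1 : ℤ) ^ (Tr (z + c)).val = ∑ z : F, (-1 : ℤ) ^ (Tr z).val :=
    Fintype.sum_equiv (Equiv.addRight c) _ _ (fun z => rfl)
  have key2 : ∑ z : F, (-1 : ℤ) ^ (Tr (z + c)).val
      = -∑ z : F, (-1 : ℤ) ^ (Tr z).val := by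
    rw [← Finset.sum_neg_distrib]
    refine Finset.sum_congr rfl fun z _ => ?_
    rw [map_add, sign_add', hc]
    norm_num [ZMod.val_one]
  linarith

lemma T_zero (hm : 1 ≤ m) : T m 0 = 2 ^ m - 1 := by
  have hcard : Fintype.card F = 2 ^ m := by
    have := GaloisField.card 2 m (by omega)
    simpa [Nat.card_eq_fintype_card] using this
  have h1 : T m 0 = ∑ z ∈ Finset.univ.filter (fun z : F => z ≠ 0), (1 : ℤ) := by
    refine Finset.sum_congr rfl fun z _ => by simp
  rw [h1, Finset.sum_const, nsmul_eq_mul, mul_one,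
    Finset.filter_ne', Finset.card_erase_of_mem (Finset.mem_univ _), Finset.card_univ, hcard]
  have h2 : (1:ℕ) ≤ 2 ^ m := Nat.one_le_two_pow
  push_cast [Nat.cast_sub h2]
  ring

lemma T_ne_zero (a : F) (ha : a ≠ 0) : T m a = -1 := by
  have hfull : ∑ z : F, (-1 : ℤ) ^ (Tr (a * z)).val = 0 := by
    have := Fintype.sum_equiv (Equiv.mulLeft₀ a ha)
      (fun z : F => (-1 : ℤ) ^ (Tr (a * z)).val)
      (fun z : F => (-1 : ℤ) ^ (Tr z).val) (fun z => rfl)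
    rw [this]
    exact sum_char_all m
  rw [T, sum_split, hfull]
  simp

lemma char_two_sum (a : F) : a + 1 + 1 = a := by
  have h2 : (1 + 1 : F) = 0 := by
    rw [one_add_one_eq_two]
    have : CharP F 2 := inferInstance
    exact_mod_cast CharP.cast_eq_zero F 2
  simp [add_assoc, h2]

lemma key_identity (a : F) :
    4 * chiD m a = T m a - T m (a + 1) - kloos m a + kloos m (a + 1) := by
  have hD : Dset m = (Finset.univ.filter (fun z : F => z ≠ 0)).filter
      (fun z => Tr z = 1 ∧ Tr z⁻¹ = 1) := by
    rw [Dset, Finset.filter_filter]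
  have lhs : 4 * chiD m a = ∑ z ∈ Finset.univ.filter (fun z : F => z ≠ 0),
      4 * (if Tr z = 1 ∧ Tr z⁻¹ = 1 then (-1 : ℤ) ^ (Tr (a * z)).val else 0) := by
    rw [chiD, hD, Finset.sum_filter, Finset.mul_sum]
  rw [lhs, T, T, kloos, kloos, ← Finset.sum_sub_distrib, ← Finset.sum_sub_distrib,
    ← Finset.sum_add_distrib]
  refine Finset.sum_congr rfl fun z hz => ?_
  have h1 : (a + 1) * z = a * z + z := by ring
  rw [h1]
  simp only [map_add]
  exact point_lemma' (Tr z) (Tr z⁻¹) (Tr (a * z))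

lemma kloos_zero : kloos m 0 = -1 := by
  have h1 : kloos m 0 = ∑ x ∈ Finset.univ.filter (fun x : F => x ≠ 0),
      (-1 : ℤ) ^ (Tr x⁻¹).val := by
    refine Finset.sum_congr rfl fun x _ => by rw [zero_mul, zero_add]
  have hinv : Function.Involutive (fun x : F => x⁻¹) := fun x => inv_inv x
  have hfull : ∑ x : F, (-1 : ℤ) ^ (Tr x⁻¹).val = 0 := by
    have := Fintype.sum_equiv hinv.toPerm
      (fun x : F => (-1 : ℤ) ^ (Tr x⁻¹).val)
      (fun x : F => (-1 : ℤ) ^ (Tr x).val) (fun x => rfl)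
    rw [this]
    exact sum_char_all m
  rw [h1, sum_split, hfull]
  simp

end Aux

/-- For `D = {z ∈ F_{2^m} : z ≠ 0, Tr_m(z) = Tr_m(z⁻¹) = 1}` one has
`χ₁(D) = −(2^m + 1 + k_m(1))/4`, and for every `a ≠ 0, 1`,
`χ_a(D) = (k_m(a+1) − k_m(a))/4`. -/
theorem chiD_eval (m : ℕ) (hm : 1 ≤ m) :
    ((chiD m 1 : ℚ) = -((2 ^ m + 1 + (kloos m 1 : ℚ)) / 4)) ∧
    (∀ a : GaloisField 2 m, a ≠ 0 → a ≠ 1 →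
      (chiD m a : ℚ) = ((kloos m (a + 1) : ℚ) - (kloos m a : ℚ)) / 4) := by
  constructor
  · have hkey := key_identity m 1
    have h11 : (1 + 1 : GaloisField 2 m) = 0 := by
      have := char_two_sum m 0
      simpa using this
    rw [h11, T_zero m hm, T_ne_zero m 1 one_ne_zero, kloos_zero m] at hkey
    have h4 : (4 : ℚ) * (chiD m 1 : ℚ) = -1 - ((2:ℚ) ^ m - 1) - (kloos m 1 : ℚ) + (-1) := by
      have := congrArg (fun x : ℤ => (x : ℚ)) hkey
      push_cast at this ⊢
      linarith
    linarith
  · intro a ha0 ha1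
    have hkey := key_identity m a
    have ha1' : a + 1 ≠ 0 := by
      intro h
      apply ha1
      rw [← char_two_sum m a, h, zero_add]
    rw [T_ne_zero m a ha0, T_ne_zero m (a+1) ha1'] at hkey
    have h4 : (4 : ℚ) * (chiD m a : ℚ)
        = -1 - (-1) - (kloos m a : ℚ) + (kloos m (a+1) : ℚ) := by
      have := congrArg (fun x : ℤ => (x : ℚ)) hkey
      push_cast at this ⊢
      linarith
    linarith
end

section
/- Let q = 2^m with m ≥ 1 and, for i, j ∈ {0,1}, let D_{i,j} = {z ∈ F_q : z ≠ 0, Tr_m(z) = i, Tr_m(z^{−1}) = j}. Then 4·|D_{i,j}| = 2^m − 1 − (−1)^j − (−1)^i + (−1)^{i+j}·k_m(1); in particular |D_{0,0}| = 2^{m−2} + (k_m(1) − 3)/4 and |D_{1,0}| = |D_{0,1}| = 2^{m−2} − (k_m(1) + 1)/4. -/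
open scoped Classical

/-- The set `D_{i,j} = {z ∈ F_{2^m} : z ≠ 0, Tr_m(z) = i, Tr_m(z⁻¹) = j}`,
where `i, j ∈ {0,1}` are identified with elements of `F_2`. -/
noncomputable def Dij (m : ℕ) (i j : ZMod 2) : Finset (GaloisField 2 m) :=
  Finset.univ.filter (fun z : GaloisField 2 m => z ≠ 0 ∧
    Algebra.trace (ZMod 2) (GaloisField 2 m) z = (i : ZMod 2) ∧
    Algebra.trace (ZMod 2) (GaloisField 2 m) z⁻¹ = (j : ZMod 2))

/-- sign character on `ZMod 2` -/
def sgn (a : ZMod 2) : ℤ := (-1 : ℤ) ^ a.val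

lemma sgn_add (a b : ZMod 2) : sgn (a + b) = sgn a * sgn b := by revert a b; decide

lemma key_expand (i j a b : ZMod 2) :
    (1 + sgn i * sgn a) * (1 + sgn j * sgn b) =
      (if a = i ∧ b = j then (4 : ℤ) else 0) := by revert i j a b; decide

/-- the full character sum over the whole field vanishes -/
lemma sum_sgn_tr (m : ℕ) (hm : 1 ≤ m) :
    ∑ z : GaloisField 2 m, sgn (Algebra.trace (ZMod 2) (GaloisField 2 m) z) = 0 := by
  obtain ⟨c, hc⟩ := Algebra.trace_surjective (ZMod 2) (GaloisField 2 m) 1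
  have key : ∑ z : GaloisField 2 m, sgn (Algebra.trace (ZMod 2) (GaloisField 2 m) z)
      = ∑ z : GaloisField 2 m, sgn (Algebra.trace (ZMod 2) (GaloisField 2 m) (z + c)) :=
    (Fintype.sum_equiv (Equiv.addRight c) _ _ (fun z => rfl)).symm
  have h2 : ∀ z : GaloisField 2 m,
      sgn (Algebra.trace (ZMod 2) (GaloisField 2 m) (z + c)) =
        - sgn (Algebra.trace (ZMod 2) (GaloisField 2 m) z) := by
    intro z
    rw [map_add, hc, sgn_add]
    generalize Algebra.trace (ZMod 2) (GaloisField 2 m) z = t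
    revert t; decide
  rw [Finset.sum_congr rfl (fun z _ => h2 z), Finset.sum_neg_distrib] at key
  linarith

/-- `4·|D_{i,j}| = 2^m − 1 − (−1)^j − (−1)^i + (−1)^{i+j}·k_m(1)`; in
particular `|D_{0,0}| = 2^{m−2} + (k_m(1) − 3)/4` and
`|D_{1,0}| = |D_{0,1}| = 2^{m−2} − (k_m(1) + 1)/4`. -/
theorem card_Dij (m : ℕ) (hm : 1 ≤ m) :
    (∀ i j : ZMod 2,
      4 * ((Dij m i j).card : ℤ) =
        2 ^ m - 1 - (-1 : ℤ) ^ j.val - (-1 : ℤ) ^ i.val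
          + (-1 : ℤ) ^ (i.val + j.val) * kloos m 1) ∧
    ((Dij m 0 0).card : ℚ) = (2 : ℚ) ^ ((m : ℤ) - 2) + ((kloos m 1 : ℚ) - 3) / 4 ∧
    ((Dij m 1 0).card : ℚ) = (2 : ℚ) ^ ((m : ℤ) - 2) - ((kloos m 1 : ℚ) + 1) / 4 ∧
    (Dij m 1 0).card = (Dij m 0 1).card := by
  haveI : Fact (Nat.Prime 2) := ⟨Nat.prime_two⟩
  set F := GaloisField 2 m
  set Tr := Algebra.trace (ZMod 2) F with hTr
  set U : Finset F := Finset.univ.filter (fun x : F => x ≠ 0) with hU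
  have hcardF : Fintype.card F = 2 ^ m := by rw [← Nat.card_eq_fintype_card]; exact GaloisField.card 2 m (by omega)
  have hUcard : (U.card : ℤ) = 2 ^ m - 1 := by
    have : U.card = Fintype.card F - 1 := by
      rw [hU, Finset.filter_ne', Finset.card_erase_of_mem (Finset.mem_univ _),
        Finset.card_univ]
    rw [this, hcardF]
    have : 1 ≤ 2 ^ m := Nat.one_le_two_pow
    push_cast [Nat.cast_sub this]
    ring
  -- sum of character over nonzero elements is -1
  have hS1 : ∑ z ∈ U, sgn (Tr z) = -1 := by
    have h0 : ∑ z : F, sgn (Tr z) = 0 := sum_sgn_tr m hm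
    have := Finset.sum_filter_add_sum_filter_not (Finset.univ : Finset F)
      (fun x => x ≠ 0) (fun z => sgn (Tr z))
    have h0' : Finset.univ.filter (fun x : F => ¬ x ≠ 0) = {0} := by
      ext x; simp
    rw [h0'] at this
    simp only [Finset.sum_singleton] at this
    have hT0 : Tr (0 : F) = 0 := map_zero _
    rw [h0, ← hU] at this
    have h1 : sgn (Tr (0:F)) = 1 := by rw [hT0]; rfl
    linarith
  -- inverse map is a bijection on U
  have hinv : ∀ f : F → ℤ, ∑ z ∈ U, f z⁻¹ = ∑ z ∈ U, f z := by
    intro f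
    apply Finset.sum_nbij' (fun z => z⁻¹) (fun z => z⁻¹)
    · intro a ha; simp only [hU, Finset.mem_filter] at ha ⊢
      exact ⟨Finset.mem_univ _, inv_ne_zero ha.2⟩
    · intro a ha; simp only [hU, Finset.mem_filter] at ha ⊢
      exact ⟨Finset.mem_univ _, inv_ne_zero ha.2⟩
    · intro a ha; simp only [hU, Finset.mem_filter] at ha; exact inv_inv a
    · intro a ha; simp only [hU, Finset.mem_filter] at ha; exact inv_inv a
    · intro a ha; rfl
  have hS2 : ∑ z ∈ U, sgn (Tr z⁻¹) = -1 := by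
    rw [hinv (fun z => sgn (Tr z))]; exact hS1
  have hK : kloos m 1 = ∑ z ∈ U, sgn (Tr z) * sgn (Tr z⁻¹) := by
    unfold kloos
    apply Finset.sum_congr rfl
    intro x hx
    rw [one_mul, map_add]
    exact sgn_add _ _
  have main : ∀ i j : ZMod 2,
      4 * ((Dij m i j).card : ℤ) =
        2 ^ m - 1 - (-1 : ℤ) ^ j.val - (-1 : ℤ) ^ i.val
          + (-1 : ℤ) ^ (i.val + j.val) * kloos m 1 := by
    intro i j
    have hD : Dij m i j = U.filter (fun z => Tr z = i ∧ Tr z⁻¹ = j) := by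
      unfold Dij
      rw [hU, Finset.filter_filter]
    have expand : ∑ z ∈ U, (1 + sgn i * sgn (Tr z)) * (1 + sgn j * sgn (Tr z⁻¹))
        = 4 * ((Dij m i j).card : ℤ) := by
      rw [hD]
      rw [Finset.sum_congr rfl (fun z _ => key_expand i j (Tr z) (Tr z⁻¹))]
      rw [← Finset.sum_filter, Finset.sum_const, nsmul_eq_mul]
      push_cast; ring
    rw [← expand]
    have expand2 : ∀ z ∈ U, (1 + sgn i * sgn (Tr z)) * (1 + sgn j * sgn (Tr z⁻¹))
        = 1 + sgn i * sgn (Tr z) + sgn j * sgn (Tr z⁻¹)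
          + sgn i * sgn j * (sgn (Tr z) * sgn (Tr z⁻¹)) := by
      intro z _; ring
    rw [Finset.sum_congr rfl expand2]
    rw [Finset.sum_add_distrib, Finset.sum_add_distrib, Finset.sum_add_distrib,
      ← Finset.mul_sum, ← Finset.mul_sum, ← Finset.mul_sum, hS1, hS2, ← hK,
      Finset.sum_const, nsmul_eq_mul, mul_one, hUcard]
    have : sgn i * sgn j = (-1 : ℤ) ^ (i.val + j.val) := by
      rw [pow_add]; rfl
    rw [this]
    simp only [sgn]
    ring
  refine ⟨main, ?_, ?_, ?_⟩
  · have h := main 0 0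
    simp only [ZMod.val_zero, ZMod.val_one, pow_zero, pow_one, Nat.add_zero, one_mul] at h
    have h4 : ((Dij m 0 0).card : ℚ) = ((2:ℚ)^m - 3 + kloos m 1) / 4 := by
      have hz : (4:ℤ) * ((Dij m 0 0).card : ℤ) = 2 ^ m - 3 + kloos m 1 := by linarith
      have hq : (4 : ℚ) * ((Dij m 0 0).card : ℚ) = 2 ^ m - 3 + kloos m 1 := by
        exact_mod_cast hz
      linarith
    rw [h4]
    have hpow : (2:ℚ) ^ ((m:ℤ) - 2) = (2:ℚ) ^ m / 4 := by
      rw [zpow_sub₀ (by norm_num : (2:ℚ) ≠ 0), zpow_natCast]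
      norm_num
    rw [hpow]; ring
  · have h := main 1 0
    simp only [ZMod.val_zero, ZMod.val_one, pow_zero, pow_one, Nat.add_zero, one_mul] at h
    have h4 : ((Dij m 1 0).card : ℚ) = ((2:ℚ)^m - 1 - kloos m 1) / 4 := by
      have hz : (4:ℤ) * ((Dij m 1 0).card : ℤ) = 2 ^ m - 1 - kloos m 1 := by linarith
      have hq : (4 : ℚ) * ((Dij m 1 0).card : ℚ) = 2 ^ m - 1 - kloos m 1 := by
        exact_mod_cast hz
      linarith
    rw [h4]
    have hpow : (2:ℚ) ^ ((m:ℤ) - 2) = (2:ℚ) ^ m / 4 := by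
      rw [zpow_sub₀ (by norm_num : (2:ℚ) ≠ 0), zpow_natCast]
      norm_num
    rw [hpow]; ring
  · have h1 := main 1 0
    have h2 := main 0 1
    simp only [ZMod.val_zero, ZMod.val_one, pow_zero, pow_one, Nat.add_zero,
      Nat.zero_add, one_mul] at h1 h2
    have h4 : (4:ℤ) * (Dij m 1 0).card = 4 * (Dij m 0 1).card := by linarith
    exact_mod_cast by linarith [h4]
end
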